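/- The higher derangement numbers d_n^k := e_n^k / k! satisfy the recurrence d_n^k = (1/k)(d_n^{k-1} + d_{n-1}^{k-1}) for 1 ≤ k ≤ n. -/
import Mathlib


/-- Euler's difference table: diagonal `eulerE j j = j!` and
`eulerE k j = eulerE k (j+1) - eulerE (k-1) j`. -/
def eulerE : ℕ → ℕ → ℤ
  | k, j =>
    if _h : k ≤ j then (Nat.factorial k : ℤ)
    else eulerE k (j + 1) - eulerE (k - 1) j
  termination_by k j => k - j
  decreasing_by all_goals omega

/-- Higher derangement numbers `dTab n k = eulerE n k / k!` (as rationals). -/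
noncomputable def dTab (n k : ℕ) : ℚ := (eulerE n k : ℚ) / (Nat.factorial k : ℚ)

lemma eulerE_step (n k : ℕ) (hk : 1 ≤ k) (hkn : k ≤ n) :
    eulerE n k = eulerE n (k - 1) + eulerE (n - 1) (k - 1) := by
  have h : eulerE n (k - 1) = eulerE n (k - 1 + 1) - eulerE (n - 1) (k - 1) := by
    rw [eulerE]
    simp [show ¬ n ≤ k - 1 by omega]
  rw [show k - 1 + 1 = k by omega] at h
  linarith

theorem dTab_recurrence (n k : ℕ) (hk : 1 ≤ k) (hkn : k ≤ n) :
    dTab n k = (1 / (k : ℚ)) * (dTab n (k - 1) + dTab (n - 1) (k - 1)) := by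
  have hfac : (Nat.factorial k : ℚ) = (k : ℚ) * (Nat.factorial (k - 1) : ℚ) := by
    rw [show k = (k - 1) + 1 by omega, Nat.factorial_succ]
    push_cast
    ring_nf
  have hk0 : (k : ℚ) ≠ 0 := by positivity
  have hf0 : (Nat.factorial (k - 1) : ℚ) ≠ 0 := by
    exact_mod_cast Nat.factorial_ne_zero _
  unfold dTab
  rw [eulerE_step n k hk hkn, hfac]
  push_cast
  field_simp
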